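/- For every integer n ≥ 1, the function a ↦ (n!/πⁿ)(1 + ‖a‖²)^{−(n+1)} on ℂⁿ integrates to 1 with respect to Lebesgue measure; i.e., the Fubini–Study measure σ_n on ℂⁿ is a probability measure. -/

import Mathlib

open MeasureTheory
open scoped ENNReal Real

noncomputable instance (n : ℕ) : MeasurableSpace (EuclideanSpace ℂ (Fin n)) :=
  MeasurableSpace.comap WithLp.ofLp MeasurableSpace.pi
instance (n : ℕ) : BorelSpace (EuclideanSpace ℂ (Fin n)) := PiLp.borelSpace 2
noncomputable instance (n : ℕ) : MeasureSpace (EuclideanSpace ℂ (Fin n)) :=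
  ⟨Measure.map (WithLp.toLp 2) (Measure.pi fun _ => volume)⟩

/-- The Fubini–Study measure on `ℂⁿ`, with density `(n!/πⁿ)(1+‖a‖²)^{-(n+1)}` with
respect to Lebesgue measure. -/
noncomputable def fubiniStudyCn (n : ℕ) : Measure (EuclideanSpace ℂ (Fin n)) :=
  volume.withDensity fun a =>
    ENNReal.ofReal ((n.factorial : ℝ) / π ^ n * ((1 + ‖a‖ ^ 2) ^ (n + 1))⁻¹)

section FSAux

open Set Filter
open scoped Topology

private lemma fs_radial_integral (m : ℕ) :
    ∫ y in Set.Ioi (0:ℝ), y ^ (2*m+1) * ((1 + y^2)^(m+2))⁻¹ = (2*((m:ℝ)+1))⁻¹ := by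
  have key : ∀ y : ℝ, HasDerivAt (fun y : ℝ => (2*((m:ℝ)+1))⁻¹ * (y^2/(1+y^2))^(m+1))
      (y ^ (2*m+1) * ((1 + y^2)^(m+2))⁻¹) y := by
    intro y
    have h0 : (1:ℝ) + y^2 ≠ 0 := by positivity
    have h1 : HasDerivAt (fun y : ℝ => y^2) (2*y) y := by
      simpa using hasDerivAt_pow 2 y
    have h2 : HasDerivAt (fun y : ℝ => 1 + y^2) (2*y) y := h1.const_add 1
    have h3 := h1.div h2 h0
    have h4 := (h3.pow (m+1)).const_mul ((2*((m:ℝ)+1))⁻¹)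
    refine h4.congr_deriv ?_
    have h5 : ((m:ℝ)+1) ≠ 0 := by positivity
    simp only [Pi.div_apply, Nat.add_sub_cancel, Nat.cast_add, Nat.cast_one, div_pow]
    field_simp
    ring
  have lim : Tendsto (fun y : ℝ => (2*((m:ℝ)+1))⁻¹ * (y^2/(1+y^2))^(m+1)) atTop
      (𝓝 ((2*((m:ℝ)+1))⁻¹)) := by
    have hb : Tendsto (fun y : ℝ => y^2/(1+y^2)) atTop (𝓝 1) := by
      have heq : (fun y : ℝ => y^2/(1+y^2)) = fun y : ℝ => 1 - (1+y^2)⁻¹ := by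
        funext y
        have : (1:ℝ) + y^2 ≠ 0 := by positivity
        field_simp
        ring
      rw [heq]
      have h2 : Tendsto (fun y : ℝ => (1+y^2)⁻¹) atTop (𝓝 0) := by
        apply tendsto_inv_atTop_zero.comp
        exact tendsto_atTop_add_const_left _ 1 (tendsto_pow_atTop (by norm_num))
      simpa using tendsto_const_nhds.sub h2
    have := (hb.pow (m+1)).const_mul ((2*((m:ℝ)+1))⁻¹)
    simpa using this
  have h := integral_Ioi_of_hasDerivAt_of_nonneg' (fun y _ => key y)
    (fun y hy => by have hy' : 0 < y := hy; positivity) lim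
  rw [h]
  norm_num

private noncomputable def fsPhi (n : ℕ) :
    EuclideanSpace ℂ (Fin n) ≃ᵐ EuclideanSpace ℝ (Fin n ⊕ Fin n) :=
  (((((MeasurableEquiv.toLp 2 (Fin n → ℂ)).symm :
        EuclideanSpace ℂ (Fin n) ≃ᵐ (Fin n → ℂ)).trans
      (MeasurableEquiv.piCongrRight fun _ => Complex.measurableEquivRealProd)).trans
    (MeasurableEquiv.arrowProdEquivProdArrow ℝ ℝ (Fin n))).trans
      (MeasurableEquiv.sumPiEquivProdPi fun _ : Fin n ⊕ Fin n => ℝ).symm).trans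
        (MeasurableEquiv.toLp 2 (Fin n ⊕ Fin n → ℝ))

private lemma fs_hPhi (n : ℕ) : MeasurePreserving (fsPhi n) volume volume := by
  have h1 : MeasurePreserving ((MeasurableEquiv.toLp 2 (Fin n → ℂ)).symm :
      EuclideanSpace ℂ (Fin n) ≃ᵐ (Fin n → ℂ)) volume volume :=
    (show MeasurePreserving (MeasurableEquiv.toLp 2 (Fin n → ℂ) :
      (Fin n → ℂ) ≃ᵐ EuclideanSpace ℂ (Fin n)) volume volume from
      ⟨(MeasurableEquiv.toLp 2 (Fin n → ℂ)).measurable, rfl⟩).symm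
  have h2 : MeasurePreserving
      (MeasurableEquiv.piCongrRight fun _ : Fin n => Complex.measurableEquivRealProd)
      volume volume :=
    volume_preserving_pi fun _ => Complex.volume_preserving_equiv_real_prod
  have h3 := volume_measurePreserving_arrowProdEquivProdArrow ℝ ℝ (Fin n)
  have h4 := volume_measurePreserving_sumPiEquivProdPi_symm fun _ : Fin n ⊕ Fin n => ℝ
  have h5 := (EuclideanSpace.volume_preserving_symm_measurableEquiv_toLp (Fin n ⊕ Fin n)).symm
  exact (((h5.comp h4).comp h3).comp h2).comp h1

private lemma fs_norm_Phi (n : ℕ) (a : EuclideanSpace ℂ (Fin n)) : ‖fsPhi n a‖ = ‖a‖ := by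
  have hinl : ∀ i, fsPhi n a (Sum.inl i) = (a i).re := fun _ => rfl
  have hinr : ∀ i, fsPhi n a (Sum.inr i) = (a i).im := fun _ => rfl
  rw [EuclideanSpace.norm_eq, EuclideanSpace.norm_eq]
  congr 1
  rw [Fintype.sum_sum_type]
  simp only [hinl, hinr, Real.norm_eq_abs, sq_abs]
  rw [← Finset.sum_add_distrib]
  refine Finset.sum_congr rfl fun i _ => ?_
  rw [Complex.sq_norm, Complex.normSq_apply]
  ring

private lemma fs_main_integral (m : ℕ) :
    ∫ a : EuclideanSpace ℂ (Fin (m+1)),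
      ((m+1).factorial : ℝ) / π ^ (m+1) * ((1 + ‖a‖ ^ 2) ^ (m+1 + 1))⁻¹ = 1 := by
  set C : ℝ := ((m+1).factorial : ℝ) / π ^ (m+1) with hC
  have htrans : ∫ a : EuclideanSpace ℂ (Fin (m+1)), C * ((1 + ‖a‖ ^ 2) ^ (m+1+1))⁻¹ =
      ∫ y : EuclideanSpace ℝ (Fin (m+1) ⊕ Fin (m+1)), C * ((1 + ‖y‖ ^ 2) ^ (m+1+1))⁻¹ := by
    rw [← (fs_hPhi (m+1)).integral_comp (fsPhi (m+1)).measurableEmbedding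
      (fun y => C * ((1 + ‖y‖ ^ 2) ^ (m+1+1))⁻¹)]
    exact integral_congr_ae (Eventually.of_forall fun a => by simp only [fs_norm_Phi])
  rw [htrans]
  have hnt : Nontrivial (EuclideanSpace ℝ (Fin (m+1) ⊕ Fin (m+1))) := inferInstance
  rw [integral_fun_norm_addHaar (volume : Measure (EuclideanSpace ℝ (Fin (m+1) ⊕ Fin (m+1))))
    (fun r => C * ((1 + r ^ 2) ^ (m+1+1))⁻¹)]
  have hdim : Module.finrank ℝ (EuclideanSpace ℝ (Fin (m+1) ⊕ Fin (m+1))) = 2*m+2 := by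
    rw [finrank_euclideanSpace, Fintype.card_sum, Fintype.card_fin]
    ring
  rw [hdim]
  have hball : (volume (Metric.ball (0 : EuclideanSpace ℝ (Fin (m+1) ⊕ Fin (m+1))) 1)).toReal
      = π ^ (m+1) / ((m+1).factorial : ℝ) := by
    rw [EuclideanSpace.volume_ball, Fintype.card_sum, Fintype.card_fin]
    have h1 : Real.sqrt π ^ (m + 1 + (m + 1)) = π ^ (m+1) := by
      rw [show m + 1 + (m + 1) = 2*(m+1) by ring, pow_mul, Real.sq_sqrt Real.pi_nonneg]
    have h2 : Real.Gamma ((↑(m + 1 + (m + 1)) : ℝ) / 2 + 1) = ((m+1).factorial : ℝ) := by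
      rw [show ((↑(m + 1 + (m + 1)) : ℝ) / 2 + 1) = ((m+1 : ℕ) : ℝ) + 1 by push_cast; ring,
        Real.Gamma_nat_eq_factorial]
    rw [h1, h2]
    rw [ENNReal.ofReal_one, one_pow, one_mul, ENNReal.toReal_ofReal (by positivity)]
  rw [measureReal_def, hball]
  have hrad := fs_radial_integral m
  have hint : ∫ y in Set.Ioi (0:ℝ), y ^ (2*m+2-1) • (C * ((1 + y^2) ^ (m+1+1))⁻¹)
      = C * (2*((m:ℝ)+1))⁻¹ := by
    simp only [smul_eq_mul, show 2*m+2-1 = 2*m+1 from rfl]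
    rw [show (fun y : ℝ => y ^ (2*m+1) * (C * ((1 + y^2) ^ (m+1+1))⁻¹))
        = fun y : ℝ => C * (y ^ (2*m+1) * ((1 + y^2) ^ (m+2))⁻¹) from by funext y; ring,
      integral_const_mul, hrad]
  rw [hint]
  rw [nsmul_eq_mul, smul_eq_mul, hC]
  have hπ : (π : ℝ) ≠ 0 := Real.pi_ne_zero
  have hf : ((m+1).factorial : ℝ) ≠ 0 := Nat.cast_ne_zero.mpr (Nat.factorial_ne_zero _)
  have hm : ((m:ℝ)+1) ≠ 0 := by positivity
  push_cast
  field_simp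

private lemma fs_integrable (m : ℕ) :
    Integrable (fun a : EuclideanSpace ℂ (Fin (m+1)) =>
      ((m+1).factorial : ℝ) / π ^ (m+1) * ((1 + ‖a‖ ^ 2) ^ (m+1 + 1))⁻¹) volume := by
  set C : ℝ := ((m+1).factorial : ℝ) / π ^ (m+1) with hC
  have hC0 : 0 ≤ C := by rw [hC]; positivity
  haveI hHaar : (volume : Measure (EuclideanSpace ℂ (Fin (m+1)))).IsAddHaarMeasure :=
    (PiLp.continuousLinearEquiv 2 ℝ (fun _ : Fin (m+1) => ℂ)).symm.isAddHaarMeasure_map _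
  have hfr : (Module.finrank ℝ (EuclideanSpace ℂ (Fin (m+1))) : ℝ) < 2*(m:ℝ)+4 := by
    rw [← Module.finrank_mul_finrank ℝ ℂ (EuclideanSpace ℂ (Fin (m+1))),
      Complex.finrank_real_complex, finrank_euclideanSpace, Fintype.card_fin]
    push_cast
    linarith
  have h0 : Integrable (fun a : EuclideanSpace ℂ (Fin (m+1)) =>
      ((1:ℝ) + ‖a‖) ^ (-(2*(m:ℝ)+4))) volume := integrable_one_add_norm hfr
  refine Integrable.mono' ((h0.const_mul (C * 2^(m+2)))) ?_ ?_
  · apply Continuous.aestronglyMeasurable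
    exact continuous_const.mul (Continuous.inv₀ (((continuous_const.add
      ((continuous_norm).pow 2)).pow (m+2))) (fun a => by positivity))
  · refine Filter.Eventually.of_forall fun a => ?_
    have hb : (0:ℝ) ≤ ‖a‖ := norm_nonneg a
    have hrw : ((1:ℝ) + ‖a‖) ^ (-(2*(m:ℝ)+4)) = (((1:ℝ)+‖a‖)^(2*m+4 : ℕ))⁻¹ := by
      rw [show -(2*(m:ℝ)+4) = -(((2*m+4 : ℕ) : ℝ)) by push_cast; ring,
        Real.rpow_neg (by positivity), Real.rpow_natCast]
    have hsq : ((1:ℝ)+‖a‖)^2 ≤ 2*(1+‖a‖^2) := by nlinarith [sq_nonneg (1-‖a‖)]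
    have hpow : ((1:ℝ)+‖a‖)^(2*m+4 : ℕ) ≤ 2^(m+2) * (1+‖a‖^2)^(m+2) := by
      calc ((1:ℝ)+‖a‖)^(2*m+4 : ℕ) = (((1:ℝ)+‖a‖)^2)^(m+2) := by
            rw [← pow_mul]; ring_nf
        _ ≤ (2*(1+‖a‖^2))^(m+2) := pow_le_pow_left₀ (by positivity) hsq _
        _ = 2^(m+2) * (1+‖a‖^2)^(m+2) := by rw [mul_pow]
    have hkey : ((1+‖a‖^2)^(m+2))⁻¹ ≤ 2^(m+2) * (((1:ℝ)+‖a‖)^(2*m+4 : ℕ))⁻¹ := by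
      have h1 : (((1:ℝ)+‖a‖)^(2*m+4 : ℕ)) / 2^(m+2) ≤ (1+‖a‖^2)^(m+2) := by
        rw [div_le_iff₀ (by positivity)]
        linarith [hpow]
      have h2 := inv_anti₀ (by positivity : (0:ℝ) < (((1:ℝ)+‖a‖)^(2*m+4 : ℕ)) / 2^(m+2)) h1
      rwa [inv_div, div_eq_mul_inv] at h2
    calc ‖C * ((1 + ‖a‖ ^ 2) ^ (m+1+1))⁻¹‖ = C * ((1 + ‖a‖ ^ 2) ^ (m+2))⁻¹ := by
          rw [Real.norm_eq_abs, abs_of_nonneg (by positivity)]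
      _ ≤ C * (2^(m+2) * (((1:ℝ)+‖a‖)^(2*m+4 : ℕ))⁻¹) :=
          mul_le_mul_of_nonneg_left hkey hC0
      _ = C * 2^(m+2) * ((1:ℝ) + ‖a‖) ^ (-(2*(m:ℝ)+4)) := by rw [hrw]; ring

end FSAux

/-- The Fubini–Study density on `ℂⁿ` integrates to `1`; i.e. the Fubini–Study measure is a
probability measure. -/
theorem fubiniStudy_isProbability (n : ℕ) (hn : 1 ≤ n) :
    (∫ a : EuclideanSpace ℂ (Fin n),
        (n.factorial : ℝ) / π ^ n * ((1 + ‖a‖ ^ 2) ^ (n + 1))⁻¹ = 1) ∧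
      IsProbabilityMeasure (fubiniStudyCn n) := by
  obtain ⟨m, rfl⟩ : ∃ m, n = m + 1 := ⟨n - 1, (Nat.succ_pred_eq_of_pos hn).symm⟩
  have hInt := fs_main_integral m
  have hIntegrable := fs_integrable m
  refine ⟨hInt, ⟨?_⟩⟩
  rw [fubiniStudyCn, withDensity_apply _ MeasurableSet.univ, setLIntegral_univ,
    ← ofReal_integral_eq_lintegral_ofReal hIntegrable
      (Filter.Eventually.of_forall fun a => by positivity), hInt, ENNReal.ofReal_one]
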